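/- Let μ_φ, μ_1 : [0,1] → [0,∞) be decreasing functions with ∫_0^1 μ_φ(t) dt = ∫_0^1 μ_1(t) dt (both finite), and suppose there exists a ∈ [0,1] with μ_φ(t) ≥ μ_1(t) for t ≤ a and μ_φ(t) ≤ μ_1(t) for t ≥ a. Let Φ: [0,1] → ℝ be differentiable with Φ' strictly increasing, and suppose ∫_0^1 μ_φ(t) Φ'(t) dt = ∫_0^1 μ_1(t) Φ'(t) dt (both finite). Then μ_φ(t) = μ_1(t) for almost every t ∈ [0,1]. -/

import Mathlib

open Set MeasureTheory intervalIntegral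

/-- Rigidity lemma: if two decreasing functions on `[0,1]` have the same integral, the same
integral against `Φ'` for a differentiable `Φ` with strictly increasing derivative, and they
cross exactly once (in the sense that `μφ ≥ μ1` before some `a` and `μφ ≤ μ1` after `a`),
then they agree almost everywhere on `[0,1]`. -/
theorem rigidity_of_distribution_functions
    (μφ μ1 : ℝ → ℝ)
    (hμφ_anti : AntitoneOn μφ (Icc 0 1)) (hμ1_anti : AntitoneOn μ1 (Icc 0 1))
    (hμφ_nn : ∀ t ∈ Icc (0:ℝ) 1, 0 ≤ μφ t) (hμ1_nn : ∀ t ∈ Icc (0:ℝ) 1, 0 ≤ μ1 t)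
    (hint : ∫ t in (0:ℝ)..1, μφ t = ∫ t in (0:ℝ)..1, μ1 t)
    (a : ℝ) (ha : a ∈ Icc (0:ℝ) 1)
    (hcross₁ : ∀ t ∈ Icc (0:ℝ) a, μ1 t ≤ μφ t)
    (hcross₂ : ∀ t ∈ Icc a 1, μφ t ≤ μ1 t)
    (Φ : ℝ → ℝ) (hΦ : DifferentiableOn ℝ Φ (Icc 0 1))
    (hΦ' : StrictMonoOn (deriv Φ) (Icc 0 1))
    (hintΦ : ∫ t in (0:ℝ)..1, μφ t * deriv Φ t = ∫ t in (0:ℝ)..1, μ1 t * deriv Φ t) :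
    ∀ᵐ t : ℝ, t ∈ Icc (0:ℝ) 1 → μφ t = μ1 t := by
  set g := deriv Φ with hgdef
  have hgmono : MonotoneOn g (Icc 0 1) := hΦ'.monotoneOn
  have hIcc : MeasurableSet (Icc (0:ℝ) 1) := measurableSet_Icc
  have h01 : (0:ℝ) ≤ 1 := by norm_num
  have h0mem : (0:ℝ) ∈ Icc (0:ℝ) 1 := by constructor <;> norm_num
  have h1mem : (1:ℝ) ∈ Icc (0:ℝ) 1 := by constructor <;> norm_num
  -- a.e. measurability
  have hmφ : AEMeasurable μφ (volume.restrict (Icc 0 1)) :=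
    aemeasurable_restrict_of_antitoneOn hIcc hμφ_anti
  have hm1 : AEMeasurable μ1 (volume.restrict (Icc 0 1)) :=
    aemeasurable_restrict_of_antitoneOn hIcc hμ1_anti
  have hmg : AEMeasurable g (volume.restrict (Icc 0 1)) :=
    aemeasurable_restrict_of_monotoneOn hIcc hgmono
  -- bounds
  have hbφ : ∀ t ∈ Icc (0:ℝ) 1, |μφ t| ≤ μφ 0 := fun t ht => by
    rw [abs_of_nonneg (hμφ_nn t ht)]; exact hμφ_anti h0mem ht ht.1
  have hb1 : ∀ t ∈ Icc (0:ℝ) 1, |μ1 t| ≤ μ1 0 := fun t ht => by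
    rw [abs_of_nonneg (hμ1_nn t ht)]; exact hμ1_anti h0mem ht ht.1
  have hbg : ∀ t ∈ Icc (0:ℝ) 1, |g t| ≤ |g 0| + |g 1| := fun t ht => by
    rcases abs_le.1 (le_refl |g 0|) with ⟨hg0, _⟩
    have h1 : g t ≤ g 1 := hgmono ht h1mem ht.2
    have h2 : g 0 ≤ g t := hgmono h0mem ht ht.1
    rw [abs_le]
    constructor
    · have : -(|g 0| + |g 1|) ≤ g 0 := by
        have := neg_abs_le (g 0); have := abs_nonneg (g 1); linarith
      linarith
    · have : g 1 ≤ |g 0| + |g 1| := by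
        have := le_abs_self (g 1); have := abs_nonneg (g 0); linarith
      linarith
  -- generic integrability criterion
  have integ_of_bdd : ∀ (f : ℝ → ℝ) (C : ℝ), AEMeasurable f (volume.restrict (Icc 0 1)) →
      (∀ t ∈ Icc (0:ℝ) 1, |f t| ≤ C) → IntegrableOn f (Icc 0 1) := by
    intro f C hm hb
    apply Integrable.mono' (integrable_const C) hm.aestronglyMeasurable
    filter_upwards [ae_restrict_mem hIcc] with t ht
    simpa using hb t ht
  have hiφ : IntegrableOn μφ (Icc 0 1) := integ_of_bdd μφ (μφ 0) hmφ hbφ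
  have hi1 : IntegrableOn μ1 (Icc 0 1) := integ_of_bdd μ1 (μ1 0) hm1 hb1
  have hiφg : IntegrableOn (fun t => μφ t * g t) (Icc 0 1) := by
    refine integ_of_bdd _ (μφ 0 * (|g 0| + |g 1|)) (hmφ.mul hmg) fun t ht => ?_
    rw [abs_mul]
    have h1 := hbφ t ht; have h2 := hbg t ht
    have h3 := abs_nonneg (μφ t); have h4 := abs_nonneg (g t)
    nlinarith
  have hi1g : IntegrableOn (fun t => μ1 t * g t) (Icc 0 1) := by
    refine integ_of_bdd _ (μ1 0 * (|g 0| + |g 1|)) (hm1.mul hmg) fun t ht => ?_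
    rw [abs_mul]
    have h1 := hb1 t ht; have h2 := hbg t ht
    have h3 := abs_nonneg (μ1 t); have h4 := abs_nonneg (g t)
    nlinarith
  -- translate interval integrals to Icc integrals
  have e1 : ∫ t in Icc (0:ℝ) 1, μφ t = ∫ t in Icc (0:ℝ) 1, μ1 t := by
    rw [integral_Icc_eq_integral_Ioc, integral_Icc_eq_integral_Ioc,
      ← intervalIntegral.integral_of_le h01, ← intervalIntegral.integral_of_le h01]
    exact hint
  have e2 : ∫ t in Icc (0:ℝ) 1, μφ t * g t = ∫ t in Icc (0:ℝ) 1, μ1 t * g t := by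
    rw [integral_Icc_eq_integral_Ioc, integral_Icc_eq_integral_Ioc,
      ← intervalIntegral.integral_of_le h01, ← intervalIntegral.integral_of_le h01]
    exact hintΦ
  -- the key auxiliary function
  set h : ℝ → ℝ := fun t => (g t - g a) * (μφ t - μ1 t) with hhdef
  have hmh : AEMeasurable h (volume.restrict (Icc 0 1)) :=
    (hmg.sub aemeasurable_const).mul (hmφ.sub hm1)
  have hih : IntegrableOn h (Icc 0 1) := by
    refine integ_of_bdd _ ((|g 0| + |g 1| + |g a|) * (μφ 0 + μ1 0)) hmh fun t ht => ?_
    rw [hhdef]; simp only []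
    rw [abs_mul]
    have h1 := hbg t ht; have h2 := hbφ t ht; have h3 := hb1 t ht
    have h4 : |g t - g a| ≤ |g t| + |g a| := abs_sub _ _
    have h5 : |μφ t - μ1 t| ≤ |μφ t| + |μ1 t| := abs_sub _ _
    have h6 := abs_nonneg (g t - g a); have h7 := abs_nonneg (μφ t - μ1 t)
    nlinarith
  -- ∫ h = 0
  have hInt0 : ∫ t in Icc (0:ℝ) 1, h t = 0 := by
    have hrw : ∀ t, h t = (μφ t * g t - μ1 t * g t) - g a * (μφ t - μ1 t) := by
      intro t; rw [hhdef]; ring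
    calc ∫ t in Icc (0:ℝ) 1, h t
        = ∫ t in Icc (0:ℝ) 1, ((μφ t * g t - μ1 t * g t) - g a * (μφ t - μ1 t)) := by
          exact integral_congr_ae (Filter.Eventually.of_forall fun t => hrw t)
      _ = (∫ t in Icc (0:ℝ) 1, (μφ t * g t - μ1 t * g t))
          - ∫ t in Icc (0:ℝ) 1, g a * (μφ t - μ1 t) := by
          exact integral_sub (hiφg.sub hi1g) ((hiφ.sub hi1).const_mul _)
      _ = ((∫ t in Icc (0:ℝ) 1, μφ t * g t) - ∫ t in Icc (0:ℝ) 1, μ1 t * g t)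
          - g a * ((∫ t in Icc (0:ℝ) 1, μφ t) - ∫ t in Icc (0:ℝ) 1, μ1 t) := by
          rw [integral_sub hiφg hi1g, MeasureTheory.integral_const_mul, integral_sub hiφ hi1]
      _ = 0 := by rw [e1, e2]; ring
  -- h ≤ 0 on Icc 0 1
  have hnp : ∀ t ∈ Icc (0:ℝ) 1, h t ≤ 0 := by
    intro t ht
    rw [hhdef]
    rcases le_total t a with hta | hat
    · have hg' : g t ≤ g a := hgmono ht ha hta
      have hμ : μ1 t ≤ μφ t := hcross₁ t ⟨ht.1, hta⟩
      exact mul_nonpos_of_nonpos_of_nonneg (by linarith) (by linarith)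
    · have hg' : g a ≤ g t := hgmono ha ht hat
      have hμ : μφ t ≤ μ1 t := hcross₂ t ⟨hat, ht.2⟩
      exact mul_nonpos_of_nonneg_of_nonpos (by linarith) (by linarith)
  -- conclude h = 0 a.e. on Icc 0 1
  have hae0 : -h =ᵐ[volume.restrict (Icc 0 1)] 0 := by
    rw [← integral_eq_zero_iff_of_nonneg_ae ?_ hih.neg]
    · simp [MeasureTheory.integral_neg, hInt0]
    · filter_upwards [ae_restrict_mem hIcc] with t ht
      simp only [Pi.neg_apply, Pi.zero_apply]
      linarith [hnp t ht]
  have hane : ∀ᵐ t : ℝ, t ≠ a := by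
    refine ae_iff.mpr ?_
    simpa using measure_singleton a
  rw [← ae_restrict_iff' hIcc]
  filter_upwards [hae0, hane.filter_mono (ae_mono Measure.restrict_le_self),
    ae_restrict_mem hIcc] with t h0 hta htm
  have h0' : (g t - g a) * (μφ t - μ1 t) = 0 := by
    have := h0; simp only [Pi.neg_apply, Pi.zero_apply, neg_eq_zero] at this
    exact this
  have hgne : g t - g a ≠ 0 := by
    rcases lt_or_gt_of_ne hta with hlt | hgt
    · exact ne_of_lt (by linarith [hΦ' htm ha hlt])
    · exact ne_of_gt (by linarith [hΦ' ha htm hgt])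
  have := (mul_eq_zero.1 h0').resolve_left hgne
  linarith
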